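/- arXiv:1503.02119 — 2 statements merged into one kernel-verified Lean document; each statement's English description precedes it below -/
import Mathlib

section
/- Uniqueness for Schlögl's second model (Example 1, via criterion (C3)): Let S be a finite nonempty set, β₀, β₂, δ₁, δ₃ > 0, b(k) = β₀ + β₂·k·(k−1), a(k) = δ₁·k + δ₃·k·(k−1)·(k−2), and let p : S × S → [0,∞) satisfy p(u,u) = 0 and ∑_{v ∈ S} p(u,v) = 1 for every u. Let q be the Q-matrix on E = ℕ^S defined by: q(i, i^{u+}) = b(i_u); q(i, i^{u−}) = a(i_u) when i_u ≥ 1; q(i, i^{u,v}) = i_u·p(u,v) when i_u ≥ 1 and u ≠ v; q(i,i) = −∑_{u}(b(i_u) + a(i_u) + i_u); and q(i,j) = 0 for all other j ≠ i (rates to coinciding target states being added). Then q is a totally stable, conservative Q-matrix and for every λ > 0 the only λ-solution is u = 0 (equivalently, the corresponding Q-process is unique). -/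
open scoped BigOperators Classical

/-- `q` is a totally stable, conservative Q-matrix on `E`:
off-diagonal entries are nonnegative, the jump rates `q_i = -q i i` are
nonnegative (and finite), and the off-diagonal row sums equal `q_i`. -/
def IsQMatrix {E : Type*} (q : E → E → ℝ) : Prop :=
  (∀ i j, i ≠ j → 0 ≤ q i j) ∧ (∀ i, q i i ≤ 0) ∧
    ∀ i, HasSum (fun j => if j = i then 0 else q i j) (-q i i)

/-- `u` is a `λ`-solution of `(λ I - Q) u = 0`, `0 ≤ u ≤ 1`:
`∑_{j ≠ i} q(i,j) u(j) = (λ + q_i) u(i)` for every `i`. -/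
def IsLamSolution {E : Type*} (q : E → E → ℝ) (lam : ℝ) (u : E → ℝ) : Prop :=
  (∀ i, 0 ≤ u i ∧ u i ≤ 1) ∧
    ∀ i, HasSum (fun j => if j = i then 0 else q i j * u j) ((lam + -q i i) * u i)

/-- The drift condition `Qφ ≤ cφ`: for every `i`, the series
`∑_{j ≠ i} q(i,j) φ(j)` is finite and
`∑_{j ≠ i} q(i,j) φ(j) - q_i φ(i) ≤ c φ(i)`. -/
def DriftLE {E : Type*} (q : E → E → ℝ) (φ : E → ℝ) (c : ℝ) : Prop :=
  ∀ i, Summable (fun j => if j = i then 0 else q i j * φ j) ∧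
    (∑' j, if j = i then 0 else q i j * φ j) - (-q i i) * φ i ≤ c * φ i

/-- The drift condition `Qφ ≥ cφ`: for every `i`, the series
`∑_{j ≠ i} q(i,j) φ(j)` converges and
`∑_{j ≠ i} q(i,j) φ(j) - q_i φ(i) ≥ c φ(i)`. -/
def DriftGE {E : Type*} (q : E → E → ℝ) (φ : E → ℝ) (c : ℝ) : Prop :=
  ∀ i, Summable (fun j => if j = i then 0 else q i j * φ j) ∧
    c * φ i ≤ (∑' j, if j = i then 0 else q i j * φ j) - (-q i i) * φ i

/-- The Q-matrix of Schlögl's second model on `E = ℕ^S`: in each vessel `u`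
there is a birth rate `b (i u) = β₀ + β₂ i_u (i_u - 1)` towards `i^{u+}`, a
death rate `a (i u) = δ₁ i_u + δ₃ i_u (i_u - 1)(i_u - 2)` towards `i^{u-}`
(when `i_u ≥ 1`), and a migration rate `i_u p(u,v)` towards `i^{u,v}` (when
`i_u ≥ 1` and `u ≠ v`); rates to coinciding target states are added, the
diagonal entry is `-∑_u (b (i u) + a (i u) + i_u)`, and all other entries
vanish. -/
noncomputable def schloglQ (S : Type*) [Fintype S] [DecidableEq S]
    (β₀ β₂ δ₁ δ₃ : ℝ) (p : S → S → ℝ) : (S → ℕ) → (S → ℕ) → ℝ :=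
  fun i j =>
    if j = i then
      -(∑ u : S, ((β₀ + β₂ * (i u : ℝ) * ((i u : ℝ) - 1)) +
        (δ₁ * (i u : ℝ) + δ₃ * (i u : ℝ) * ((i u : ℝ) - 1) * ((i u : ℝ) - 2)) +
        (i u : ℝ)))
    else
      ∑ u : S,
        ((if j = Function.update i u (i u + 1) then
            β₀ + β₂ * (i u : ℝ) * ((i u : ℝ) - 1) else 0) +
         (if 1 ≤ i u ∧ j = Function.update i u (i u - 1) then
            δ₁ * (i u : ℝ) + δ₃ * (i u : ℝ) * ((i u : ℝ) - 1) * ((i u : ℝ) - 2)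
          else 0) +
         ∑ v : S,
           (if u ≠ v ∧ 1 ≤ i u ∧
                j = Function.update (Function.update i u (i u - 1)) v (i v + 1)
            then (i u : ℝ) * p u v else 0))


lemma nat_mul_nonneg1 (k : ℕ) : 0 ≤ (k:ℝ) * ((k:ℝ)-1) := by
  rcases k with _|n
  · norm_num
  · push_cast; nlinarith [Nat.cast_nonneg (α := ℝ) n]

lemma nat_mul_nonneg2 (k : ℕ) : 0 ≤ (k:ℝ) * ((k:ℝ)-1) * ((k:ℝ)-2) := by
  rcases k with _|_|n
  · norm_num
  · norm_num
  · push_cast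
    have hn : (0:ℝ) ≤ n := Nat.cast_nonneg n
    nlinarith [mul_nonneg (mul_nonneg (by linarith : (0:ℝ) ≤ (n:ℝ)+2) (by linarith : (0:ℝ) ≤ (n:ℝ)+1)) hn]

lemma upd_ne_plus {S : Type*} [DecidableEq S] (i : S → ℕ) (u : S) :
    Function.update i u (i u + 1) ≠ i := by
  intro h
  have := congrFun h u
  simp [Function.update_self] at this

lemma upd_ne_minus {S : Type*} [DecidableEq S] (i : S → ℕ) (u : S) (h1 : 1 ≤ i u) :
    Function.update i u (i u - 1) ≠ i := by
  intro h
  have := congrFun h u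
  rw [Function.update_self] at this
  omega

lemma upd_ne_mig {S : Type*} [DecidableEq S] (i : S → ℕ) (u v : S) (huv : u ≠ v) (h1 : 1 ≤ i u) :
    Function.update (Function.update i u (i u - 1)) v (i v + 1) ≠ i := by
  intro h
  have := congrFun h u
  rw [Function.update_of_ne huv, Function.update_self] at this
  omega

lemma hasSum_if_eq {E : Type*} (t : E) [inst : DecidablePred (fun j : E => j = t)] (r : ℝ) (f : E → ℝ) :
    HasSum (fun j => if j = t then r * f j else 0) (r * f t) := by
  have h : (fun j => if j = t then r * f j else 0) = fun j => if j = t then r * f t else 0 := by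
    funext j
    by_cases h : j = t
    · rw [if_pos h, if_pos h, h]
    · rw [if_neg h, if_neg h]
  rw [h]; exact hasSum_ite_eq t _

lemma hasSum_if_cond {E : Type*} (c : Prop) (t : E)
    [inst : ∀ j : E, Decidable (c ∧ j = t)] [Decidable c] (r : ℝ) (f : E → ℝ) :
    HasSum (fun j => if c ∧ j = t then r * f j else 0) (if c then r * f t else 0) := by
  by_cases hc : c
  · have h : (fun j => if c ∧ j = t then r * f j else 0)
        = fun j => if j = t then r * f j else 0 := by
      funext j
      by_cases h : j = t
      · rw [if_pos ⟨hc, h⟩, if_pos h]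
      · rw [if_neg (fun hh => h hh.2), if_neg h]
    rw [h, if_pos hc]
    exact hasSum_if_eq t r f
  · have h : (fun j => if c ∧ j = t then r * f j else 0) = fun _ => (0:ℝ) := by
      funext j; rw [if_neg (fun hh => hc hh.1)]
    rw [h, if_neg hc]
    exact hasSum_zero

lemma hasSum_if_cond2 {E : Type*} (c₁ c₂ : Prop) (t : E)
    [inst : ∀ j : E, Decidable (c₁ ∧ c₂ ∧ j = t)] [Decidable (c₁ ∧ c₂)] (r : ℝ) (f : E → ℝ) :
    HasSum (fun j => if c₁ ∧ c₂ ∧ j = t then r * f j else 0) (if c₁ ∧ c₂ then r * f t else 0) := by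
  by_cases hc : c₁ ∧ c₂
  · have h : (fun j => if c₁ ∧ c₂ ∧ j = t then r * f j else 0)
        = fun j => if j = t then r * f j else 0 := by
      funext j
      by_cases h : j = t
      · rw [if_pos ⟨hc.1, hc.2, h⟩, if_pos h]
      · rw [if_neg (fun hh => h hh.2.2), if_neg h]
    rw [h, if_pos hc]
    exact hasSum_if_eq t r f
  · have h : (fun j => if c₁ ∧ c₂ ∧ j = t then r * f j else 0) = fun _ => (0:ℝ) := by
      funext j; rw [if_neg (fun hh => hc ⟨hh.1, hh.2.1⟩)]
    rw [h, if_neg hc]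
    exact hasSum_zero

set_option maxHeartbeats 1000000 in
lemma schlogl_hasSum {S : Type*} [Fintype S] [DecidableEq S]
    (β₀ β₂ δ₁ δ₃ : ℝ) (p : S → S → ℝ) (i : S → ℕ) (f : (S → ℕ) → ℝ)
    (instEq : ∀ j : S → ℕ, Decidable (j = i)) :
    HasSum (fun j => @ite ℝ (j = i) (instEq j) 0 (schloglQ S β₀ β₂ δ₁ δ₃ p i j * f j))
      (∑ u : S,
        ((β₀ + β₂ * (i u : ℝ) * ((i u : ℝ) - 1)) * f (Function.update i u (i u + 1)) +
         (if 1 ≤ i u then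
            (δ₁ * (i u : ℝ) + δ₃ * (i u : ℝ) * ((i u : ℝ) - 1) * ((i u : ℝ) - 2)) *
              f (Function.update i u (i u - 1)) else 0) +
         ∑ v : S,
           (if u ≠ v ∧ 1 ≤ i u then
              ((i u : ℝ) * p u v) *
                f (Function.update (Function.update i u (i u - 1)) v (i v + 1)) else 0))) := by
  have hfun : (fun j => @ite ℝ (j = i) (instEq j) 0 (schloglQ S β₀ β₂ δ₁ δ₃ p i j * f j)) =
      fun j => ∑ u : S,
        ((if j = Function.update i u (i u + 1) then
            (β₀ + β₂ * (i u : ℝ) * ((i u : ℝ) - 1)) * f j else 0) +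
         (if 1 ≤ i u ∧ j = Function.update i u (i u - 1) then
            (δ₁ * (i u : ℝ) + δ₃ * (i u : ℝ) * ((i u : ℝ) - 1) * ((i u : ℝ) - 2)) * f j
          else 0) +
         ∑ v : S,
           (if u ≠ v ∧ 1 ≤ i u ∧
                j = Function.update (Function.update i u (i u - 1)) v (i v + 1)
            then ((i u : ℝ) * p u v) * f j else 0)) := by
    funext j
    by_cases hj : j = i
    · subst hj
      rw [if_pos rfl]
      symm
      apply Finset.sum_eq_zero
      intro u _
      rw [if_neg (fun h => upd_ne_plus j u h.symm)]
      rw [if_neg (fun h : 1 ≤ j u ∧ _ => upd_ne_minus j u h.1 h.2.symm)]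
      rw [Finset.sum_eq_zero fun v _ =>
        if_neg (fun h : u ≠ v ∧ 1 ≤ j u ∧ _ => upd_ne_mig j u v h.1 h.2.1 h.2.2.symm)]
      norm_num
    · rw [if_neg hj]
      simp only [schloglQ]
      rw [if_neg hj, Finset.sum_mul]
      refine Finset.sum_congr rfl fun u _ => ?_
      rw [add_mul, add_mul, Finset.sum_mul]
      congr 1
      · congr 1 <;> rw [ite_mul, zero_mul]
      · exact Finset.sum_congr rfl fun v _ => by rw [ite_mul, zero_mul]
  rw [hfun]
  apply hasSum_sum
  intro u _
  exact ((hasSum_if_eq _ _ f).add (hasSum_if_cond _ _ _ f)).add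
    (hasSum_sum fun v _ => hasSum_if_cond2 _ _ _ _ f)

lemma schlogl_rowsum {S : Type*} [Fintype S] [DecidableEq S]
    (β₀ β₂ δ₁ δ₃ : ℝ) (p : S → S → ℝ)
    (hpd : ∀ u, p u u = 0) (hp1 : ∀ u, ∑ v : S, p u v = 1) (i : S → ℕ) :
    ∑ u : S, ((β₀ + β₂ * (i u : ℝ) * ((i u : ℝ) - 1)) +
      (if 1 ≤ i u then
        δ₁ * (i u : ℝ) + δ₃ * (i u : ℝ) * ((i u : ℝ) - 1) * ((i u : ℝ) - 2) else 0) +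
      ∑ v : S, (if u ≠ v ∧ 1 ≤ i u then (i u : ℝ) * p u v else 0))
    = ∑ u : S, ((β₀ + β₂ * (i u : ℝ) * ((i u : ℝ) - 1)) +
        (δ₁ * (i u : ℝ) + δ₃ * (i u : ℝ) * ((i u : ℝ) - 1) * ((i u : ℝ) - 2)) +
        (i u : ℝ)) := by
  refine Finset.sum_congr rfl fun u _ => ?_
  by_cases hk : 1 ≤ i u
  · rw [if_pos hk]
    congr 1
    have hv : ∀ v ∈ Finset.univ, (if u ≠ v ∧ 1 ≤ i u then (i u:ℝ) * p u v else 0)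
        = (i u : ℝ) * p u v := by
      intro v _
      by_cases hv : u = v
      · subst hv; rw [if_neg (fun h => h.1 rfl), hpd u, mul_zero]
      · rw [if_pos ⟨hv, hk⟩]
    rw [Finset.sum_congr rfl hv, ← Finset.mul_sum, hp1 u, mul_one]
  · have h0 : i u = 0 := by omega
    rw [if_neg hk, Finset.sum_eq_zero (fun v _ => if_neg (fun h => hk h.2)), h0]
    norm_num

lemma psi_update {S : Type*} [Fintype S] [DecidableEq S] (i : S → ℕ) (u : S) (x : ℕ) :
    ∑ w : S, ((Function.update i u x) w : ℝ) = (∑ w : S, (i w : ℝ)) - (i u : ℝ) + (x : ℝ) := by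
  have h : ∀ w ∈ Finset.univ, ((Function.update i u x) w : ℝ)
      = Function.update (fun w => (i w : ℝ)) u (x : ℝ) w := by
    intro w _
    by_cases hw : w = u
    · subst hw; rw [Function.update_self, Function.update_self]
    · rw [Function.update_of_ne hw, Function.update_of_ne hw]
  rw [Finset.sum_congr rfl h, Finset.sum_update_of_mem (Finset.mem_univ u),
    Finset.sum_eq_sum_sdiff_singleton_add (Finset.mem_univ u) (fun w => (i w : ℝ))]
  ring

lemma gbound (β₂ δ₃ : ℝ) (hβ₂ : 0 < β₂) (hδ₃ : 0 < δ₃) (k : ℕ) :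
    β₂ * (k:ℝ) * ((k:ℝ)-1) - δ₃ * (k:ℝ) * ((k:ℝ)-1) * ((k:ℝ)-2) ≤ β₂ * (β₂/δ₃+2)^2 := by
  have hx : (0:ℝ) ≤ k := Nat.cast_nonneg k
  have h1 := nat_mul_nonneg1 k
  have h2 := nat_mul_nonneg2 k
  have hK : (0:ℝ) < β₂/δ₃ + 2 := by positivity
  by_cases h : (k:ℝ) ≤ β₂/δ₃ + 2
  · nlinarith [mul_nonneg hδ₃.le h2,
      mul_le_mul_of_nonneg_left (mul_le_mul h h hx hK.le) hβ₂.le,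
      mul_nonneg hβ₂.le hx]
  · push_neg at h
    have hb : β₂ < ((k:ℝ)-2) * δ₃ := (div_lt_iff₀ hδ₃).mp (by linarith)
    nlinarith [mul_nonneg h1 (by nlinarith : (0:ℝ) ≤ δ₃*((k:ℝ)-2) - β₂),
      mul_nonneg hβ₂.le (sq_nonneg (β₂/δ₃+2))]

lemma gbound2 (β₀ β₂ δ₁ δ₃ : ℝ) (hβ₂ : 0 < β₂) (hδ₁ : 0 < δ₁) (hδ₃ : 0 < δ₃) (k : ℕ) :
    (β₀ + β₂ * (k:ℝ) * ((k:ℝ)-1)) -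
      (if 1 ≤ k then δ₁ * (k:ℝ) + δ₃ * (k:ℝ) * ((k:ℝ)-1) * ((k:ℝ)-2) else 0)
      ≤ β₀ + β₂ * (β₂/δ₃+2)^2 := by
  have hg := gbound β₂ δ₃ hβ₂ hδ₃ k
  by_cases hk : 1 ≤ k
  · rw [if_pos hk]
    nlinarith [mul_nonneg hδ₁.le (Nat.cast_nonneg (α := ℝ) k)]
  · have h0 : k = 0 := by omega
    subst h0
    rw [if_neg hk]
    push_cast
    nlinarith [mul_nonneg hβ₂.le (sq_nonneg (β₂/δ₃+2))]

set_option maxHeartbeats 1000000 in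
/-- Uniqueness for Schlögl's second model (Example 1, via criterion (C3)):
the matrix `schloglQ` is a totally stable, conservative Q-matrix on the
countable set `ℕ^S` and for every `λ > 0` the only `λ`-solution is `0`
(equivalently, the corresponding `Q`-process is unique). -/
theorem schlogl_uniqueness (S : Type*) [Fintype S] [DecidableEq S] [Nonempty S]
    (β₀ β₂ δ₁ δ₃ : ℝ) (hβ₀ : 0 < β₀) (hβ₂ : 0 < β₂) (hδ₁ : 0 < δ₁)
    (hδ₃ : 0 < δ₃) (p : S → S → ℝ) (hp0 : ∀ u v, 0 ≤ p u v)
    (hpd : ∀ u, p u u = 0) (hp1 : ∀ u, ∑ v : S, p u v = 1) :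
    IsQMatrix (schloglQ S β₀ β₂ δ₁ δ₃ p) ∧
    ∀ lam : ℝ, 0 < lam → ∀ u : (S → ℕ) → ℝ,
      IsLamSolution (schloglQ S β₀ β₂ δ₁ δ₃ p) lam u → u = 0 := by
  -- nonnegativity facts used repeatedly
  have hbnn : ∀ k : ℕ, 0 ≤ β₀ + β₂ * (k:ℝ) * ((k:ℝ) - 1) := by
    intro k
    nlinarith [mul_nonneg hβ₂.le (nat_mul_nonneg1 k)]
  have hann : ∀ k : ℕ, 0 ≤ δ₁ * (k:ℝ) + δ₃ * (k:ℝ) * ((k:ℝ) - 1) * ((k:ℝ) - 2) := by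
    intro k
    nlinarith [mul_nonneg hδ₁.le (Nat.cast_nonneg (α := ℝ) k),
      mul_nonneg hδ₃.le (nat_mul_nonneg2 k)]
  constructor
  · refine ⟨?_, ?_, ?_⟩
    · -- off-diagonal entries nonnegative
      intro i j hij
      simp only [schloglQ]
      rw [if_neg (Ne.symm hij)]
      refine Finset.sum_nonneg fun u _ => ?_
      refine add_nonneg (add_nonneg ?_ ?_) ?_
      · split_ifs
        exacts [hbnn (i u), le_rfl]
      · split_ifs
        exacts [hann (i u), le_rfl]
      · refine Finset.sum_nonneg fun v _ => ?_
        split_ifs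
        exacts [mul_nonneg (Nat.cast_nonneg _) (hp0 u v), le_rfl]
    · -- diagonal entries nonpositive
      intro i
      simp only [schloglQ]
      rw [if_true, neg_nonpos]
      refine Finset.sum_nonneg fun u _ => ?_
      exact add_nonneg (add_nonneg (hbnn (i u)) (hann (i u))) (Nat.cast_nonneg _)
    · -- conservativity
      intro i
      have h := schlogl_hasSum β₀ β₂ δ₁ δ₃ p i (fun _ => 1)
        (fun j => Classical.propDecidable _)
      have hfe : (fun j => @ite ℝ (j = i) (Classical.propDecidable (j = i)) 0
            (schloglQ S β₀ β₂ δ₁ δ₃ p i j * (fun _ : S → ℕ => (1:ℝ)) j))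
          = (fun j => @ite ℝ (j = i) (Classical.propDecidable (j = i)) 0
            (schloglQ S β₀ β₂ δ₁ δ₃ p i j)) := by
        funext j
        by_cases hj : j = i
        · rw [if_pos hj, if_pos hj]
        · rw [if_neg hj, if_neg hj]
          exact mul_one _
      have h1 : (∑ u : S,
            (((β₀ + β₂ * (i u : ℝ) * ((i u : ℝ) - 1)) * 1 +
              (if 1 ≤ i u then
                (δ₁ * (i u : ℝ) + δ₃ * (i u : ℝ) * ((i u : ℝ) - 1) * ((i u : ℝ) - 2)) * 1
               else 0)) +
             ∑ v : S, (if u ≠ v ∧ 1 ≤ i u then (i u : ℝ) * p u v * 1 else 0)))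
          = ∑ u : S, ((β₀ + β₂ * (i u : ℝ) * ((i u : ℝ) - 1)) +
              (if 1 ≤ i u then
                δ₁ * (i u : ℝ) + δ₃ * (i u : ℝ) * ((i u : ℝ) - 1) * ((i u : ℝ) - 2) else 0) +
              ∑ v : S, (if u ≠ v ∧ 1 ≤ i u then (i u : ℝ) * p u v else 0)) := by
        refine Finset.sum_congr rfl fun u _ => ?_
        congr 1
        · congr 1
          · exact mul_one _
          · split_ifs
            · exact mul_one _
            · rfl
        · refine Finset.sum_congr rfl fun v _ => ?_
          split_ifs
          · exact mul_one _
          · rfl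
      rw [hfe, h1, schlogl_rowsum β₀ β₂ δ₁ δ₃ p hpd hp1 i] at h
      have hdiag : -schloglQ S β₀ β₂ δ₁ δ₃ p i i
          = ∑ u : S, ((β₀ + β₂ * (i u : ℝ) * ((i u : ℝ) - 1)) +
            (δ₁ * (i u : ℝ) + δ₃ * (i u : ℝ) * ((i u : ℝ) - 1) * ((i u : ℝ) - 2)) +
            (i u : ℝ)) := by
        simp only [schloglQ]
        rw [if_true, neg_neg]
      rw [hdiag]
      exact h
  · -- uniqueness of the λ-solution
    intro lam hlam f hf
    set C : ℝ := β₀ + β₂ * (β₂/δ₃ + 2)^2 with hCdef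
    have hC : 0 < C := by
      have := mul_nonneg hβ₂.le (sq_nonneg (β₂/δ₃ + 2))
      rw [hCdef]; nlinarith
    have hcard : (0:ℝ) < (Fintype.card S : ℝ) := by
      exact_mod_cast Fintype.card_pos
    set D : ℝ := C * (Fintype.card S : ℝ) with hDdef
    have hD : 0 < D := mul_pos hC hcard
    set e : ℝ := lam / (2 * D) with hedef
    have he : 0 < e := div_pos hlam (by linarith)
    -- ψ computations
    have hψnn : ∀ i : S → ℕ, (0:ℝ) ≤ ∑ w : S, (i w : ℝ) :=
      fun i => Finset.sum_nonneg fun w _ => Nat.cast_nonneg _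
    have hψp : ∀ (i : S → ℕ) (u : S),
        ∑ w : S, ((Function.update i u (i u + 1)) w : ℝ) = (∑ w : S, (i w : ℝ)) + 1 := by
      intro i u
      rw [psi_update]
      push_cast
      ring
    have hψm : ∀ (i : S → ℕ) (u : S), 1 ≤ i u →
        ∑ w : S, ((Function.update i u (i u - 1)) w : ℝ) = (∑ w : S, (i w : ℝ)) - 1 := by
      intro i u h
      rw [psi_update, Nat.cast_sub h]
      push_cast
      ring
    have hψmig : ∀ (i : S → ℕ) (u v : S), u ≠ v → 1 ≤ i u →
        ∑ w : S, ((Function.update (Function.update i u (i u - 1)) v (i v + 1)) w : ℝ)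
          = ∑ w : S, (i w : ℝ) := by
      intro i u v huv h
      rw [psi_update, psi_update, Function.update_of_ne (Ne.symm huv), Nat.cast_sub h]
      push_cast
      ring
    -- the key estimate at a maximum point
    have key : ∀ ε : ℝ, 0 < ε → ∀ i₀ : S → ℕ,
        (∀ j, f j - ε * (1 + e * ∑ w : S, (j w : ℝ)) ≤
          f i₀ - ε * (1 + e * ∑ w : S, (i₀ w : ℝ))) → f i₀ ≤ ε / 2 := by
      intro ε hε i₀ hmax
      have hmaxd : ∀ j, f j - f i₀ ≤ ε * e * ((∑ w : S, (j w : ℝ)) - ∑ w : S, (i₀ w : ℝ)) := by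
        intro j
        have h1 := hmax j
        have h2 : ε * (1 + e * ∑ w : S, (j w : ℝ)) - ε * (1 + e * ∑ w : S, (i₀ w : ℝ))
            = ε * e * ((∑ w : S, (j w : ℝ)) - ∑ w : S, (i₀ w : ℝ)) := by ring
        linarith
      have hT := (schlogl_hasSum β₀ β₂ δ₁ δ₃ p i₀ f
        (fun j => Classical.propDecidable _)).unique (hf.2 i₀)
      have hdiag : -schloglQ S β₀ β₂ δ₁ δ₃ p i₀ i₀
          = ∑ u : S, ((β₀ + β₂ * (i₀ u : ℝ) * ((i₀ u : ℝ) - 1)) +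
            (if 1 ≤ i₀ u then
              δ₁ * (i₀ u : ℝ) + δ₃ * (i₀ u : ℝ) * ((i₀ u : ℝ) - 1) * ((i₀ u : ℝ) - 2) else 0) +
            ∑ v : S, (if u ≠ v ∧ 1 ≤ i₀ u then (i₀ u : ℝ) * p u v else 0)) := by
        simp only [schloglQ]
        rw [if_true, neg_neg, ← schlogl_rowsum β₀ β₂ δ₁ δ₃ p hpd hp1 i₀]
      rw [hdiag] at hT
      -- rewrite λ f(i₀) as a sum of local differences
      have hstep : lam * f i₀ = ∑ u : S,
          ((β₀ + β₂ * (i₀ u : ℝ) * ((i₀ u : ℝ) - 1)) *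
              (f (Function.update i₀ u (i₀ u + 1)) - f i₀) +
           (if 1 ≤ i₀ u then
              (δ₁ * (i₀ u : ℝ) + δ₃ * (i₀ u : ℝ) * ((i₀ u : ℝ) - 1) * ((i₀ u : ℝ) - 2)) *
                (f (Function.update i₀ u (i₀ u - 1)) - f i₀) else 0) +
           ∑ v : S, (if u ≠ v ∧ 1 ≤ i₀ u then ((i₀ u : ℝ) * p u v) *
              (f (Function.update (Function.update i₀ u (i₀ u - 1)) v (i₀ v + 1)) - f i₀)
            else 0)) := by
        have h1 : lam * f i₀ = (∑ u : S,
            ((β₀ + β₂ * (i₀ u : ℝ) * ((i₀ u : ℝ) - 1)) * f (Function.update i₀ u (i₀ u + 1)) +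
             (if 1 ≤ i₀ u then
                (δ₁ * (i₀ u : ℝ) + δ₃ * (i₀ u : ℝ) * ((i₀ u : ℝ) - 1) * ((i₀ u : ℝ) - 2)) *
                  f (Function.update i₀ u (i₀ u - 1)) else 0) +
             ∑ v : S, (if u ≠ v ∧ 1 ≤ i₀ u then ((i₀ u : ℝ) * p u v) *
                f (Function.update (Function.update i₀ u (i₀ u - 1)) v (i₀ v + 1)) else 0)))
            - (∑ u : S, ((β₀ + β₂ * (i₀ u : ℝ) * ((i₀ u : ℝ) - 1)) +
              (if 1 ≤ i₀ u then
                δ₁ * (i₀ u : ℝ) + δ₃ * (i₀ u : ℝ) * ((i₀ u : ℝ) - 1) * ((i₀ u : ℝ) - 2) else 0) +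
              ∑ v : S, (if u ≠ v ∧ 1 ≤ i₀ u then (i₀ u : ℝ) * p u v else 0))) * f i₀ := by
          rw [hT]; ring
        rw [h1, Finset.sum_mul, ← Finset.sum_sub_distrib]
        refine Finset.sum_congr rfl fun u _ => ?_
        have e1 : (if 1 ≤ i₀ u then
              (δ₁ * (i₀ u : ℝ) + δ₃ * (i₀ u : ℝ) * ((i₀ u : ℝ) - 1) * ((i₀ u : ℝ) - 2)) *
                f (Function.update i₀ u (i₀ u - 1)) else 0)
            - (if 1 ≤ i₀ u then
              δ₁ * (i₀ u : ℝ) + δ₃ * (i₀ u : ℝ) * ((i₀ u : ℝ) - 1) * ((i₀ u : ℝ) - 2) else 0) * f i₀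
            = (if 1 ≤ i₀ u then
              (δ₁ * (i₀ u : ℝ) + δ₃ * (i₀ u : ℝ) * ((i₀ u : ℝ) - 1) * ((i₀ u : ℝ) - 2)) *
                (f (Function.update i₀ u (i₀ u - 1)) - f i₀) else 0) := by
          split_ifs <;> ring
        have e2 : (∑ v : S, (if u ≠ v ∧ 1 ≤ i₀ u then ((i₀ u : ℝ) * p u v) *
                f (Function.update (Function.update i₀ u (i₀ u - 1)) v (i₀ v + 1)) else 0))
            - (∑ v : S, (if u ≠ v ∧ 1 ≤ i₀ u then (i₀ u : ℝ) * p u v else 0)) * f i₀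
            = ∑ v : S, (if u ≠ v ∧ 1 ≤ i₀ u then ((i₀ u : ℝ) * p u v) *
                (f (Function.update (Function.update i₀ u (i₀ u - 1)) v (i₀ v + 1)) - f i₀)
              else 0) := by
          rw [Finset.sum_mul, ← Finset.sum_sub_distrib]
          refine Finset.sum_congr rfl fun v _ => ?_
          split_ifs <;> ring
        linear_combination e1 + e2
      -- bound each summand
      have hbd : ∀ u ∈ (Finset.univ : Finset S),
          ((β₀ + β₂ * (i₀ u : ℝ) * ((i₀ u : ℝ) - 1)) *
              (f (Function.update i₀ u (i₀ u + 1)) - f i₀) +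
           (if 1 ≤ i₀ u then
              (δ₁ * (i₀ u : ℝ) + δ₃ * (i₀ u : ℝ) * ((i₀ u : ℝ) - 1) * ((i₀ u : ℝ) - 2)) *
                (f (Function.update i₀ u (i₀ u - 1)) - f i₀) else 0) +
           ∑ v : S, (if u ≠ v ∧ 1 ≤ i₀ u then ((i₀ u : ℝ) * p u v) *
              (f (Function.update (Function.update i₀ u (i₀ u - 1)) v (i₀ v + 1)) - f i₀)
            else 0)) ≤ ε * e * C := by
        intro u _
        have hd1 : f (Function.update i₀ u (i₀ u + 1)) - f i₀ ≤ ε * e := by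
          have := hmaxd (Function.update i₀ u (i₀ u + 1))
          rw [hψp i₀ u] at this
          calc f (Function.update i₀ u (i₀ u + 1)) - f i₀
              ≤ ε * e * ((∑ w : S, (i₀ w : ℝ)) + 1 - ∑ w : S, (i₀ w : ℝ)) := this
            _ = ε * e := by ring
        have ht1 : (β₀ + β₂ * (i₀ u : ℝ) * ((i₀ u : ℝ) - 1)) *
            (f (Function.update i₀ u (i₀ u + 1)) - f i₀)
            ≤ (β₀ + β₂ * (i₀ u : ℝ) * ((i₀ u : ℝ) - 1)) * (ε * e) :=
          mul_le_mul_of_nonneg_left hd1 (hbnn (i₀ u))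
        have ht2 : (if 1 ≤ i₀ u then
              (δ₁ * (i₀ u : ℝ) + δ₃ * (i₀ u : ℝ) * ((i₀ u : ℝ) - 1) * ((i₀ u : ℝ) - 2)) *
                (f (Function.update i₀ u (i₀ u - 1)) - f i₀) else 0)
            ≤ (if 1 ≤ i₀ u then
              (δ₁ * (i₀ u : ℝ) + δ₃ * (i₀ u : ℝ) * ((i₀ u : ℝ) - 1) * ((i₀ u : ℝ) - 2)) *
                (-(ε * e)) else 0) := by
          split_ifs with hk
          · refine mul_le_mul_of_nonneg_left ?_ (hann (i₀ u))
            have := hmaxd (Function.update i₀ u (i₀ u - 1))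
            rw [hψm i₀ u hk] at this
            calc f (Function.update i₀ u (i₀ u - 1)) - f i₀
                ≤ ε * e * ((∑ w : S, (i₀ w : ℝ)) - 1 - ∑ w : S, (i₀ w : ℝ)) := this
              _ = -(ε * e) := by ring
          · exact le_rfl
        have ht3 : (∑ v : S, (if u ≠ v ∧ 1 ≤ i₀ u then ((i₀ u : ℝ) * p u v) *
              (f (Function.update (Function.update i₀ u (i₀ u - 1)) v (i₀ v + 1)) - f i₀)
            else 0)) ≤ 0 := by
          refine Finset.sum_nonpos fun v _ => ?_
          split_ifs with hc
          · have hdd : f (Function.update (Function.update i₀ u (i₀ u - 1)) v (i₀ v + 1)) - f i₀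
                ≤ 0 := by
              have := hmaxd (Function.update (Function.update i₀ u (i₀ u - 1)) v (i₀ v + 1))
              rw [hψmig i₀ u v hc.1 hc.2] at this
              calc f (Function.update (Function.update i₀ u (i₀ u - 1)) v (i₀ v + 1)) - f i₀
                  ≤ ε * e * ((∑ w : S, (i₀ w : ℝ)) - ∑ w : S, (i₀ w : ℝ)) := this
                _ = 0 := by ring
            exact mul_nonpos_of_nonneg_of_nonpos
              (mul_nonneg (Nat.cast_nonneg _) (hp0 u v)) hdd
          · exact le_rfl
        have hcomb : (β₀ + β₂ * (i₀ u : ℝ) * ((i₀ u : ℝ) - 1)) * (ε * e) +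
            (if 1 ≤ i₀ u then
              (δ₁ * (i₀ u : ℝ) + δ₃ * (i₀ u : ℝ) * ((i₀ u : ℝ) - 1) * ((i₀ u : ℝ) - 2)) *
                (-(ε * e)) else 0)
            = (ε * e) * ((β₀ + β₂ * (i₀ u : ℝ) * ((i₀ u : ℝ) - 1)) -
              (if 1 ≤ i₀ u then
                δ₁ * (i₀ u : ℝ) + δ₃ * (i₀ u : ℝ) * ((i₀ u : ℝ) - 1) * ((i₀ u : ℝ) - 2) else 0)) := by
          split_ifs <;> ring
        have hgb := gbound2 β₀ β₂ δ₁ δ₃ hβ₂ hδ₁ hδ₃ (i₀ u)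
        have hee : 0 ≤ ε * e := mul_nonneg hε.le he.le
        have := mul_le_mul_of_nonneg_left hgb hee
        rw [hCdef]
        linarith
      have hsum : lam * f i₀ ≤ ε * e * D := by
        calc lam * f i₀ = _ := hstep
          _ ≤ ∑ _u : S, ε * e * C := Finset.sum_le_sum hbd
          _ = (Fintype.card S : ℝ) * (ε * e * C) := by
            rw [Finset.sum_const, nsmul_eq_mul, Finset.card_univ]
          _ = ε * e * D := by rw [hDdef]; ring
      have heD : e * D = lam / 2 := by
        rw [hedef]
        field_simp
      have hfin : lam * f i₀ ≤ lam * (ε / 2) := by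
        calc lam * f i₀ ≤ ε * e * D := hsum
          _ = ε * (e * D) := by ring
          _ = ε * (lam / 2) := by rw [heD]
          _ = lam * (ε / 2) := by ring
      exact le_of_mul_le_mul_left hfin hlam
    -- the λ-solution is dominated by every ε (1 + e ψ)
    have claim : ∀ ε : ℝ, 0 < ε → ∀ i : S → ℕ,
        f i ≤ ε * (1 + e * ∑ w : S, (i w : ℝ)) := by
      intro ε hε
      by_contra hcon
      push_neg at hcon
      obtain ⟨i₁, hi₁⟩ := hcon
      set A : Set (S → ℕ) := {i | ε * (1 + e * ∑ w : S, (i w : ℝ)) < f i} with hAdef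
      have hAne : A.Nonempty := ⟨i₁, hi₁⟩
      set N : ℕ := Nat.ceil (1 / (ε * e)) with hNdef
      have hAfin : A.Finite := by
        refine Set.Finite.subset (Set.Finite.pi (fun _ : S => Set.finite_Iic N)) ?_
        intro i hi
        have hi' : ε * (1 + e * ∑ w : S, (i w : ℝ)) < f i := hi
        have hle1 : f i ≤ 1 := (hf.1 i).2
        rw [Set.mem_pi]
        intro w _
        rw [Set.mem_Iic]
        have h1 : (i w : ℝ) ≤ ∑ w' : S, (i w' : ℝ) :=
          Finset.single_le_sum (f := fun w' => ((i w' : ℕ) : ℝ)) (fun _ _ => Nat.cast_nonneg _) (Finset.mem_univ w)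
        have h3 : (i w : ℝ) < 1 / (ε * e) := by
          rw [lt_div_iff₀ (mul_pos hε he)]
          nlinarith [mul_le_mul_of_nonneg_right h1 (mul_pos hε he).le, hψnn i,
            mul_nonneg (mul_nonneg hε.le he.le) (hψnn i)]
        have h4 : (i w : ℝ) ≤ (N : ℝ) := le_trans h3.le (Nat.le_ceil _)
        exact_mod_cast h4
      obtain ⟨i₀, hi₀A, hi₀max⟩ := Set.exists_max_image A
        (fun i => f i - ε * (1 + e * ∑ w : S, (i w : ℝ))) hAfin hAne
      have hi₀A' : ε * (1 + e * ∑ w : S, (i₀ w : ℝ)) < f i₀ := hi₀A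
      have hmax : ∀ j, f j - ε * (1 + e * ∑ w : S, (j w : ℝ)) ≤
          f i₀ - ε * (1 + e * ∑ w : S, (i₀ w : ℝ)) := by
        intro j
        by_cases hj : j ∈ A
        · exact hi₀max j hj
        · have hj' : f j ≤ ε * (1 + e * ∑ w : S, (j w : ℝ)) := not_lt.mp hj
          linarith
      have hhalf := key ε hε i₀ hmax
      nlinarith [hψnn i₀, mul_nonneg (mul_nonneg hε.le he.le) (hψnn i₀)]
    -- conclude
    funext i
    have hle : f i ≤ 0 := by
      by_contra h
      push_neg at h
      have ht : (0:ℝ) ≤ ∑ w : S, (i w : ℝ) := hψnn i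
      have hpos : (0:ℝ) < 1 + e * ∑ w : S, (i w : ℝ) := by nlinarith
      have hε : 0 < f i / (2 * (1 + e * ∑ w : S, (i w : ℝ))) :=
        div_pos h (by linarith)
      have hc := claim _ hε i
      have heq : f i / (2 * (1 + e * ∑ w : S, (i w : ℝ))) *
          (1 + e * ∑ w : S, (i w : ℝ)) = f i / 2 := by
        field_simp
      rw [heq] at hc
      linarith
    exact le_antisymm hle (hf.1 i).1
end

section
/- Example 8 (a test function without a limit): There exist a totally stable, conservative Q-matrix q on ℕ with sup_{i} q_i = ∞, an increasing sequence of subsets E_n ⊆ ℕ with ⋃_n E_n = ℕ and sup_{i ∈ E_n} q_i < ∞ for every n (some E_n being infinite), a nonnegative function φ : ℕ → [0,∞), and a constant c ∈ ℝ, such that: lim_{n→∞} inf_{i ∉ E_n} φ(i) = ∞ (with the convention inf_∅ = ∞); Qφ ≤ cφ; limsup_{n→∞} φ(n) = ∞; and liminf_{n→∞} φ(n) = 1. In particular, the conditions (U1) and (U2) of the uniqueness criterion can hold with a test function φ that has no limit at infinity. -/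
open scoped BigOperators Classical

/-- Example 8 (a test function without a limit): there exist a totally
stable, conservative Q-matrix `q` on `ℕ` with unbounded rates, an increasing
sequence of subsets `En ⊆ ℕ` exhausting `ℕ` with bounded rates on each `En`
(some `En` being infinite), a nonnegative function `φ` and a constant `c`
such that `lim_n inf_{i ∉ En} φ i = ∞`, `Qφ ≤ cφ`,
`limsup_n φ n = ∞` and `liminf_n φ n = 1`. -/
theorem test_function_without_limit :
    ∃ (q : ℕ → ℕ → ℝ) (En : ℕ → Set ℕ) (φ : ℕ → ℝ) (c : ℝ),
      IsQMatrix q ∧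
      -- `sup_i q_i = ∞`
      (∀ M : ℝ, ∃ i, M ≤ -q i i) ∧
      -- increasing exhausting sequence with bounded rates on each `En`
      (∀ n, En n ⊆ En (n + 1)) ∧
      (⋃ n, En n) = Set.univ ∧
      (∀ n, ∃ M : ℝ, ∀ i ∈ En n, -q i i ≤ M) ∧
      (∃ n, (En n).Infinite) ∧
      -- (U1): nonnegative `φ` with `lim_n inf_{i ∉ En} φ i = ∞`
      (∀ i, 0 ≤ φ i) ∧
      (∀ M : ℝ, ∃ N : ℕ, ∀ n ≥ N, ∀ i ∉ En n, M ≤ φ i) ∧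
      -- (U2): `Qφ ≤ cφ`
      DriftLE q φ c ∧
      -- `limsup_n φ n = ∞`
      (∀ M : ℝ, ∀ N : ℕ, ∃ n ≥ N, M ≤ φ n) ∧
      -- `liminf_n φ n = 1`
      (∀ ε : ℝ, 0 < ε → ∃ N : ℕ, ∀ n ≥ N, 1 - ε < φ n) ∧
      (∀ ε : ℝ, 0 < ε → ∀ N : ℕ, ∃ n ≥ N, φ n < 1 + ε) := by
  refine ⟨fun i j => if Even i then 0 else if j = i then -(i:ℝ) else if j = 0 then i else 0,
    fun n => {i | Even i ∨ i ≤ n},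
    fun i => if Even i then 1 else (i:ℝ), 0, ?_, ?_, ?_, ?_, ?_, ?_, ?_, ?_, ?_, ?_, ?_, ?_⟩
  · refine ⟨?_, ?_, ?_⟩
    · intro i j hij
      by_cases hi : Even i <;> simp [hi]
      rw [if_neg (Ne.symm hij)]
      split <;> positivity
    · intro i
      by_cases hi : Even i <;> simp [hi]
    · intro i
      beta_reduce
      by_cases hi : Even i
      · simpa [hi] using hasSum_zero
      · have hi0 : i ≠ 0 := by rintro rfl; exact hi (Even.zero)
        have h0i : (0:ℕ) ≠ i := Ne.symm hi0
        rw [if_neg hi, if_pos rfl, neg_neg]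
        refine HasSum.congr_fun (hasSum_ite_eq 0 (i:ℝ)) fun j => ?_
        by_cases hj : j = i
        · simp [hj, hi0, h0i]
        · simp [hj, hi]
  · intro M
    obtain ⟨k, hk⟩ := exists_nat_ge M
    refine ⟨2 * k + 1, ?_⟩
    beta_reduce
    have h1 : ¬ Even (2 * k + 1) := by simp [Nat.even_add_one, parity_simps]
    have h2 : (k:ℝ) ≤ ((2*k+1 : ℕ) : ℝ) := by push_cast; linarith
    rw [if_neg h1, if_pos rfl, neg_neg]
    linarith
  · intro n i hi
    rcases hi with h | h
    · exact Or.inl h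
    · exact Or.inr (h.trans (Nat.le_succ n))
  · ext i
    simp only [Set.mem_iUnion, Set.mem_univ, iff_true, Set.mem_setOf_eq]
    exact ⟨i, Or.inr le_rfl⟩
  · intro n
    refine ⟨n, fun i hi => ?_⟩
    beta_reduce
    by_cases h : Even i
    · simp [h]
    · rcases hi with h' | h'
      · exact absurd h' h
      · rw [if_neg h, if_pos rfl, neg_neg]
        exact_mod_cast h'
  · exact ⟨0, Set.infinite_of_injective_forall_mem (f := fun k : ℕ => 2 * k)
      (fun a b hab => by simpa using hab) (fun k => Or.inl ⟨k, by ring⟩)⟩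
  · intro i; by_cases hi : Even i <;> simp [hi]
  · intro M
    obtain ⟨N, hN⟩ := exists_nat_ge M
    refine ⟨N, fun n hn i hi => ?_⟩
    beta_reduce
    simp only [Set.mem_setOf_eq, not_or, not_le] at hi
    have h1 : ¬ Even i := hi.1
    rw [if_neg h1]
    have h2 : (n:ℝ) < i := by exact_mod_cast hi.2
    calc M ≤ N := hN
      _ ≤ n := by exact_mod_cast hn
      _ ≤ i := le_of_lt h2
  · intro i
    beta_reduce
    by_cases hi : Even i
    · refine ⟨Summable.congr (f := fun _ : ℕ => (0:ℝ)) summable_zero (fun j => ?_), ?_⟩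
      · simp [hi]
      · rw [tsum_eq_single 0 (fun b' _ => by simp [hi])]
        simp [hi]
    · have hi0 : i ≠ 0 := by rintro rfl; exact hi Even.zero
      have h0i : (0:ℕ) ≠ i := Ne.symm hi0
      refine ⟨Summable.congr (f := fun j : ℕ => if j = 0 then (i:ℝ) else 0)
          (hasSum_ite_eq 0 (i:ℝ)).summable (fun j => ?_), ?_⟩
      · by_cases hj : j = i
        · simp [hj, hi0, h0i]
        · by_cases hj0 : j = 0 <;> simp [hj, hj0, hi, h0i]
      · rw [tsum_eq_single 0
          (fun b' hb' => by by_cases hbi : b' = i <;> simp [hbi, hb', hi])]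
        have h1 : (1:ℝ) ≤ i := by exact_mod_cast Nat.one_le_iff_ne_zero.mpr hi0
        simp only [if_neg h0i, if_neg hi, if_pos rfl, neg_neg]
        simp only [Even.zero, if_pos, if_true]
        nlinarith
  · intro M N
    obtain ⟨k, hk⟩ := exists_nat_ge M
    refine ⟨2 * (k + N) + 1, by omega, ?_⟩
    beta_reduce
    have h1 : ¬ Even (2 * (k + N) + 1) := by simp [Nat.even_add_one, parity_simps]
    rw [if_neg h1]
    have : (k:ℝ) ≤ ((2 * (k + N) + 1 : ℕ) : ℝ) := by push_cast; linarith [Nat.cast_nonneg (α := ℝ) N]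
    linarith
  · intro ε hε
    refine ⟨0, fun n _ => ?_⟩
    beta_reduce
    by_cases hn : Even n
    · rw [if_pos hn]; linarith
    · have hn0 : n ≠ 0 := by rintro rfl; exact hn Even.zero
      have : (1:ℝ) ≤ n := by exact_mod_cast Nat.one_le_iff_ne_zero.mpr hn0
      rw [if_neg hn]; linarith
  · intro ε hε N
    refine ⟨2 * N, by omega, ?_⟩
    beta_reduce
    rw [if_pos (show Even (2 * N) from ⟨N, by ring⟩)]; linarith
end
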